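/- Let F(x,y) be an irreducible binary quartic form with integer coefficients that splits in ℝ, with J_F = 0, I_F > 0 and A₃A₄ ≠ 0, and let h be a positive integer. Let ξ(x,y) = αx + βy and η(x,y) = ᾱx + β̄y be a pair of resolvent forms for F, i.e. complex conjugate linear forms satisfying ξ(x,y)⁴ − η(x,y)⁴ = 8i·√(3·I_F·|A₄|)·F(x,y) and ξ(x,y)·η(x,y) = ±(2A₁A₄x² + A₃²xy + 2A₃A₄y²)/√(12A₃²·√|A₄|) for all real x, y. Suppose (x₁,y₁) and (x₂,y₂) are integer pairs with gcd(x₁,y₁) = gcd(x₂,y₂) = 1, x₁y₂ − x₂y₁ ≠ 0, |F(x₁,y₁)| ≤ h and |F(x₂,y₂)| ≤ h, both related to the same fourth root of unity ω (i.e. ω minimizes |ω′ − η(x_j,y_j)/ξ(x_j,y_j)| over fourth roots of unity ω′, for j = 1, 2), and that |ξ(x₁,y₁)| ≤ |ξ(x₂,y₂)|. Then |ξ(x₂,y₂)| ≥ |ξ(x₁,y₁)|³ / (π·√3·h·|A₄|^{1/4}). -/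

import Mathlib

open Polynomial Complex

lemma I_pow4 : Complex.I^4 = 1 := by
  rw [show (4:ℕ) = 2*2 from rfl, pow_mul, Complex.I_sq]; norm_num

lemma abs_eq_one_of_pow4 (ω : ℂ) (h : ω^4 = 1) : ‖ω‖ = 1 := by
  have h2 : (‖ω‖)^4 = 1 := by rw [← norm_pow, h, norm_one]
  nlinarith [norm_nonneg ω, sq_nonneg (‖ω‖ - 1),
    sq_nonneg (‖ω‖ + 1), sq_nonneg ((‖ω‖)^2 - 1)]

lemma normSq_eq_one (z : ℂ) (hz : ‖z‖ = 1) : z.re^2 + z.im^2 = 1 := by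
  have := Complex.sq_norm z
  rw [hz, Complex.normSq_apply] at this
  nlinarith [this]

lemma exists_close_root (z : ℂ) (hz : ‖z‖ = 1) :
    ∃ ω' : ℂ, ω'^4 = 1 ∧ (‖ω' - z‖)^2 ≤ 2 - Real.sqrt 2 := by
  have hns := normSq_eq_one z hz
  have hs2 : Real.sqrt 2 ^ 2 = 2 := Real.sq_sqrt (by norm_num)
  have hs2n : (0:ℝ) ≤ Real.sqrt 2 := Real.sqrt_nonneg 2
  have key : ∀ w : ℂ, w^4 = 1 → (‖w - z‖)^2
      = 2 - 2*(w.re*z.re + w.im*z.im) → Real.sqrt 2 ≤ 2*(w.re*z.re + w.im*z.im) →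
      ∃ ω' : ℂ, ω'^4 = 1 ∧ (‖ω' - z‖)^2 ≤ 2 - Real.sqrt 2 := by
    intro w h1 h2 h3
    exact ⟨w, h1, by rw [h2]; linarith⟩
  have habs : ∀ w : ℂ, ‖w‖ = 1 → (‖w - z‖)^2
      = 2 - 2*(w.re*z.re + w.im*z.im) := by
    intro w hw
    have hw2 := normSq_eq_one w hw
    rw [Complex.sq_norm, Complex.normSq_apply]
    simp only [Complex.sub_re, Complex.sub_im]
    nlinarith [hns, hw2]
  rcases le_total (z.re^2) (z.im^2) with hc | hc
  · have him : Real.sqrt 2 ≤ 2 * |z.im| := by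
      have h4 : (Real.sqrt 2)^2 ≤ (2*|z.im|)^2 := by
        rw [hs2, mul_pow, _root_.sq_abs]; nlinarith
      nlinarith [abs_nonneg z.im]
    rcases le_total 0 z.im with hb | hb
    · refine key Complex.I I_pow4 (habs _ (by simp)) ?_
      simp only [Complex.I_re, Complex.I_im]
      rw [_root_.abs_of_nonneg hb] at him; linarith
    · refine key (-Complex.I) (by rw [Even.neg_pow ⟨2, rfl⟩]; exact I_pow4) (habs _ (by simp)) ?_
      simp only [Complex.neg_re, Complex.neg_im, Complex.I_re, Complex.I_im]
      rw [_root_.abs_of_nonpos hb] at him; linarith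
  · have hre : Real.sqrt 2 ≤ 2 * |z.re| := by
      have h4 : (Real.sqrt 2)^2 ≤ (2*|z.re|)^2 := by
        rw [hs2, mul_pow, _root_.sq_abs]; nlinarith
      nlinarith [abs_nonneg z.re]
    rcases le_total 0 z.re with hb | hb
    · refine key 1 (by norm_num) (habs _ (by simp)) ?_
      simp only [Complex.one_re, Complex.one_im]
      rw [_root_.abs_of_nonneg hb] at hre; linarith
    · refine key (-1) (by norm_num) (habs _ (by simp)) ?_
      simp only [Complex.neg_re, Complex.neg_im, Complex.one_re, Complex.one_im]
      rw [_root_.abs_of_nonpos hb] at hre; linarith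

lemma const_bound (a : ℝ) (ha : Real.sqrt 2 ≤ 2*a) :
    8 ≤ Real.pi * (Real.sqrt (2+2*a) * (2*a)) := by
  have hs2 : Real.sqrt 2 ^ 2 = 2 := Real.sq_sqrt (by norm_num)
  have hs2n : (0:ℝ) ≤ Real.sqrt 2 := Real.sqrt_nonneg 2
  have hs2lb : (1.414213:ℝ) ≤ Real.sqrt 2 := by nlinarith
  have hapos : (0:ℝ) < a := by nlinarith
  have hcs : Real.sqrt (2+2*a)^2 = 2+2*a := Real.sq_sqrt (by linarith)
  have hcsn : 0 ≤ Real.sqrt (2+2*a) := Real.sqrt_nonneg _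
  have h4a : (2:ℝ) ≤ (2*a)^2 := by nlinarith
  have hc2 : (4:ℝ) + 2*Real.sqrt 2 ≤ (Real.sqrt (2+2*a) * (2*a))^2 := by
    rw [mul_pow, hcs]
    calc (4:ℝ) + 2*Real.sqrt 2 = (2+Real.sqrt 2)*2 := by ring
      _ ≤ (2+2*a)*(2*a)^2 :=
          mul_le_mul (by linarith) h4a (by norm_num) (by linarith)
  have hpi : (3.141592:ℝ) < Real.pi := Real.pi_gt_d6
  have hcn : 0 ≤ Real.sqrt (2+2*a) * (2*a) := by positivity
  have hπ2 : (9.8696:ℝ) ≤ Real.pi^2 := by nlinarith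
  have h64 : (64:ℝ) ≤ (Real.pi * (Real.sqrt (2+2*a) * (2*a)))^2 := by
    rw [mul_pow]
    calc (64:ℝ) ≤ 9.8696*(4+2*Real.sqrt 2) := by nlinarith
      _ ≤ Real.pi^2 * (Real.sqrt (2+2*a) * (2*a))^2 :=
        mul_le_mul hπ2 hc2 (by linarith) (by positivity)
  have hpin : (0:ℝ) ≤ Real.pi := by linarith
  nlinarith [mul_nonneg hpin hcn]

lemma near_root_bound (z ω : ℂ) (hz : ‖z‖ = 1) (hω : ω^4 = 1)
    (hmin : ∀ ω' : ℂ, ω'^4 = 1 → ‖ω - z‖ ≤ ‖ω' - z‖) :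
    ‖ω - z‖ ≤ Real.pi/8 * ‖z^4 - 1‖ := by
  have hωa : ‖ω‖ = 1 := abs_eq_one_of_pow4 ω hω
  have hω0 : ω ≠ 0 := by
    intro h; rw [h] at hωa; simp at hωa
  obtain ⟨u, hu⟩ : ∃ u : ℂ, u = z / ω := ⟨_, rfl⟩
  have hua : ‖u‖ = 1 := by rw [hu, norm_div, hz, hωa]; norm_num
  have hab := normSq_eq_one u hua
  have hm : ‖ω - z‖ = ‖1 - u‖ := by
    have h1 : ω - z = ω * (1 - u) := by rw [hu]; field_simp
    rw [h1, norm_mul, hωa, one_mul]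
  obtain ⟨ω', hω'4, hω'⟩ := exists_close_root z hz
  have hmle : ‖ω - z‖ ^ 2 ≤ 2 - Real.sqrt 2 :=
    le_trans (pow_le_pow_left₀ (norm_nonneg _) (hmin ω' hω'4) 2) hω'
  have hm2 : ‖ω - z‖^2 = 2 - 2*u.re := by
    rw [hm, Complex.sq_norm, Complex.normSq_apply]
    simp only [Complex.sub_re, Complex.sub_im, Complex.one_re, Complex.one_im]
    nlinarith [hab]
  have ha : Real.sqrt 2 ≤ 2*u.re := by rw [hm2] at hmle; linarith
  have hapos : (0:ℝ) < u.re := by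
    nlinarith [Real.sqrt_nonneg 2, Real.sq_sqrt (show (0:ℝ) ≤ 2 by norm_num)]
  have hzu : z = u * ω := by rw [hu]; field_simp
  have hz4 : z^4 = u^4 := by rw [hzu, mul_pow, hω, mul_one]
  have hfac : z^4 - 1 = -((1-u) * (u+1) * (u^2+1)) := by rw [hz4]; ring
  have habs1 : ‖u+1‖ = Real.sqrt (2+2*u.re) := by
    rw [Complex.norm_def]
    congr 1
    rw [Complex.normSq_apply]
    simp only [Complex.add_re, Complex.add_im, Complex.one_re, Complex.one_im]
    nlinarith [hab]
  have habs2 : ‖u^2+1‖ = 2*u.re := by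
    have hns : Complex.normSq (u^2+1) = (2*u.re)^2 := by
      rw [Complex.normSq_apply]
      simp only [Complex.add_re, Complex.add_im, Complex.one_re, Complex.one_im,
        pow_two, Complex.mul_re, Complex.mul_im]
      nlinarith [hab]
    rw [Complex.norm_def, hns, Real.sqrt_sq (by linarith)]
  have habs4 : ‖z^4-1‖
      = ‖ω - z‖ * (Real.sqrt (2+2*u.re) * (2*u.re)) := by
    rw [hfac, norm_neg, norm_mul, norm_mul, habs1, habs2, hm, mul_assoc]
  have h8 := const_bound u.re ha
  have hmn : 0 ≤ ‖ω - z‖ := norm_nonneg _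
  have hpin : (0:ℝ) < Real.pi := Real.pi_pos
  rw [habs4]
  calc ‖ω - z‖ = ‖ω - z‖ * 1 := by ring
    _ ≤ ‖ω - z‖ * (Real.pi * (Real.sqrt (2+2*u.re) * (2*u.re)) / 8) := by
        apply mul_le_mul_of_nonneg_left _ hmn
        linarith
    _ = Real.pi/8 * (‖ω - z‖ * (Real.sqrt (2+2*u.re) * (2*u.re))) := by ring

lemma F_ne_zero' (a₀ a₁ a₂ a₃ a₄ : ℤ) (ha₀ : a₀ ≠ 0)
    (hirr : Irreducible (C (a₀:ℚ) * X^4 + C (a₁:ℚ) * X^3 + C (a₂:ℚ) * X^2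
        + C (a₃:ℚ) * X + C (a₄:ℚ) : ℚ[X]))
    (x y : ℤ) (hg : Int.gcd x y = 1) :
    a₀*x^4 + a₁*x^3*y + a₂*x^2*y^2 + a₃*x*y^3 + a₄*y^4 ≠ 0 := by
  intro h0
  by_cases hy : y = 0
  · subst hy
    simp only [Int.gcd] at hg
    have hx : x ≠ 0 := by
      intro hx; rw [hx] at hg; simp at hg
    rw [show (0:ℤ) = 0 from rfl] at h0
    have : a₀ * x^4 = 0 := by linarith [h0]
    rcases mul_eq_zero.mp this with h | h
    · exact ha₀ h
    · exact hx (by exact pow_eq_zero_iff (by norm_num) |>.mp h)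
  · set P : ℚ[X] := C (a₀:ℚ) * X^4 + C (a₁:ℚ) * X^3 + C (a₂:ℚ) * X^2
        + C (a₃:ℚ) * X + C (a₄:ℚ) with hP
    have hyq : (y:ℚ) ≠ 0 := Int.cast_ne_zero.mpr hy
    have hroot : P.IsRoot ((x:ℚ)/(y:ℚ)) := by
      have h0q : (a₀:ℚ)*(x:ℚ)^4 + (a₁:ℚ)*(x:ℚ)^3*(y:ℚ) + (a₂:ℚ)*(x:ℚ)^2*(y:ℚ)^2
          + (a₃:ℚ)*(x:ℚ)*(y:ℚ)^3 + (a₄:ℚ)*(y:ℚ)^4 = 0 := by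
        exact_mod_cast congrArg (fun n : ℤ => (n:ℚ)) h0
      have heval : P.eval ((x:ℚ)/(y:ℚ))
          = ((a₀:ℚ)*(x:ℚ)^4 + (a₁:ℚ)*(x:ℚ)^3*(y:ℚ) + (a₂:ℚ)*(x:ℚ)^2*(y:ℚ)^2
            + (a₃:ℚ)*(x:ℚ)*(y:ℚ)^3 + (a₄:ℚ)*(y:ℚ)^4) / (y:ℚ)^4 := by
        simp only [hP, eval_add, eval_mul, eval_pow, eval_C, eval_X]
        field_simp
      rw [IsRoot, heval, h0q, zero_div]
    have hdeg : P.natDegree = 4 := by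
      rw [hP]
      compute_degree!
    obtain ⟨q, hq⟩ := dvd_iff_isRoot.mpr hroot
    rcases hirr.isUnit_or_isUnit hq with hu | hu
    · exact Polynomial.not_isUnit_X_sub_C _ hu
    · have hq0 : q ≠ 0 := hu.ne_zero
      have : P.natDegree = 1 := by
        rw [hq, natDegree_mul (X_sub_C_ne_zero _) hq0, natDegree_X_sub_C,
          natDegree_eq_zero_of_isUnit hu]
      rw [hdeg] at this
      exact absurd this (by norm_num)

lemma assemble (p q u₁ u₂ B K c : ℝ) (hp : 0 < p) (hq : 0 < q) (hpq : p ≤ q)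
    (h1 : u₁*p^3 ≤ B) (h2 : u₂*q^3 ≤ B) (hK : K ≤ p*u₂ + q*u₁)
    (hu₁ : 0 ≤ u₁) (hu₂ : 0 ≤ u₂) (hB : 0 < B) (hc : 0 < c)
    (hBc : 2*B = K*c) : p^3/c ≤ q := by
  have hK0 : 0 < K := by nlinarith
  have e3 : p^4 ≤ q^4 := pow_le_pow_left₀ hp.le hpq 4
  have e4 : K*(p^3*q^3) ≤ (p*u₂ + q*u₁)*(p^3*q^3) :=
    mul_le_mul_of_nonneg_right hK (by positivity)
  have e5 : (p*u₂ + q*u₁)*(p^3*q^3) = p^4*(u₂*q^3) + q^4*(u₁*p^3) := by ring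
  have e6 : p^4*(u₂*q^3) ≤ p^4*B := mul_le_mul_of_nonneg_left h2 (by positivity)
  have e7 : q^4*(u₁*p^3) ≤ q^4*B := mul_le_mul_of_nonneg_left h1 (by positivity)
  have e8 : p^4*B ≤ q^4*B := mul_le_mul_of_nonneg_right e3 hB.le
  have e10 : 2*B*q^4 = K*c*q^4 := by
    rw [show (2:ℝ)*B*q^4 = (2*B)*q^4 from by ring, hBc]
  have e9 : K*(p^3*q^3) ≤ K*c*q^4 := by linarith
  have h11 : K*q^3*p^3 ≤ K*q^3*(c*q) := by linarith [e9]
  rw [div_le_iff₀ hc]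
  have h12 := le_of_mul_le_mul_left h11 (by positivity : (0:ℝ) < K*q^3)
  linarith

set_option maxHeartbeats 1000000 in
/-- The gap principle: if `(x₁,y₁)` and `(x₂,y₂)` are distinct coprime integer solutions
of `|F(x,y)| ≤ h` related to the same fourth root of unity `ω`, with
`|ξ(x₁,y₁)| ≤ |ξ(x₂,y₂)|`, then `|ξ(x₂,y₂)| ≥ |ξ(x₁,y₁)|³/(π√3·h·|A₄|^{1/4})`. -/
theorem gap_principle
    (a₀ a₁ a₂ a₃ a₄ I J A₁ A₃ A₄ h : ℤ)
    (hI : I = a₂^2 - 3*a₁*a₃ + 12*a₀*a₄)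
    (hJdef : J = 2*a₂^3 - 9*a₁*a₂*a₃ + 27*a₁^2*a₄ - 72*a₀*a₂*a₄ + 27*a₀*a₃^2)
    (hA₁ : A₁ = 12*(6*a₀*a₃ - a₁*a₂))
    (hA₃ : A₃ = 12*(6*a₁*a₄ - a₂*a₃))
    (hA₄ : A₄ = 3*(8*a₂*a₄ - 3*a₃^2))
    (F : ℤ → ℤ → ℤ)
    (hF : ∀ x y : ℤ, F x y =
      a₀*x^4 + a₁*x^3*y + a₂*x^2*y^2 + a₃*x*y^3 + a₄*y^4)
    (ha₀ : a₀ ≠ 0)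
    (hirr : Irreducible (C (a₀:ℚ) * X^4 + C (a₁:ℚ) * X^3 + C (a₂:ℚ) * X^2
        + C (a₃:ℚ) * X + C (a₄:ℚ) : ℚ[X]))
    (hsplit : ∃ r₁ r₂ r₃ r₄ : ℝ, ∀ x : ℝ,
      (a₀:ℝ)*x^4 + (a₁:ℝ)*x^3 + (a₂:ℝ)*x^2 + (a₃:ℝ)*x + (a₄:ℝ)
        = (a₀:ℝ)*(x - r₁)*(x - r₂)*(x - r₃)*(x - r₄))
    (hJ : J = 0) (hIpos : 0 < I) (hA34 : A₃ * A₄ ≠ 0) (hh : 0 < h)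
    -- the pair of resolvent forms ξ(x,y) = αx + βy, η(x,y) = ᾱx + β̄y
    (α β : ℂ) (ξ η : ℝ → ℝ → ℂ)
    (hξ : ∀ x y : ℝ, ξ x y = α*(x:ℂ) + β*(y:ℂ))
    (hη : ∀ x y : ℝ, η x y = (starRingEnd ℂ) α*(x:ℂ) + (starRingEnd ℂ) β*(y:ℂ))
    (hres1 : ∀ x y : ℝ,
      (ξ x y)^4 - (η x y)^4
        = 8 * Complex.I * (Real.sqrt (3*(I:ℝ)*|(A₄:ℝ)|) : ℂ)
          * ((a₀:ℂ)*(x:ℂ)^4 + (a₁:ℂ)*(x:ℂ)^3*(y:ℂ) + (a₂:ℂ)*(x:ℂ)^2*(y:ℂ)^2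
            + (a₃:ℂ)*(x:ℂ)*(y:ℂ)^3 + (a₄:ℂ)*(y:ℂ)^4))
    (hres2 : ∃ ε : ℂ, (ε = 1 ∨ ε = -1) ∧ ∀ x y : ℝ,
      ξ x y * η x y
        = ε * (((2*A₁*A₄ : ℤ):ℂ)*(x:ℂ)^2 + ((A₃^2 : ℤ):ℂ)*(x:ℂ)*(y:ℂ)
              + ((2*A₃*A₄ : ℤ):ℂ)*(y:ℂ)^2)
            / ((Real.sqrt (12*(A₃:ℝ)^2*Real.sqrt |(A₄:ℝ)|) : ℝ) : ℂ))
    -- the two solutions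
    (x₁ y₁ x₂ y₂ : ℤ)
    (hg1 : Int.gcd x₁ y₁ = 1) (hg2 : Int.gcd x₂ y₂ = 1)
    (hdist : x₁*y₂ - x₂*y₁ ≠ 0)
    (hF1 : |F x₁ y₁| ≤ h) (hF2 : |F x₂ y₂| ≤ h)
    -- both related to the same fourth root of unity ω
    (ω : ℂ) (hω : ω^4 = 1)
    (hrel1 : ∀ ω' : ℂ, ω'^4 = 1 →
      ‖ω - η (x₁:ℝ) (y₁:ℝ) / ξ (x₁:ℝ) (y₁:ℝ)‖
        ≤ ‖ω' - η (x₁:ℝ) (y₁:ℝ) / ξ (x₁:ℝ) (y₁:ℝ)‖)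
    (hrel2 : ∀ ω' : ℂ, ω'^4 = 1 →
      ‖ω - η (x₂:ℝ) (y₂:ℝ) / ξ (x₂:ℝ) (y₂:ℝ)‖
        ≤ ‖ω' - η (x₂:ℝ) (y₂:ℝ) / ξ (x₂:ℝ) (y₂:ℝ)‖)
    (hle : ‖ξ (x₁:ℝ) (y₁:ℝ)‖ ≤ ‖ξ (x₂:ℝ) (y₂:ℝ)‖) :
    ‖ξ (x₂:ℝ) (y₂:ℝ)‖
      ≥ ‖ξ (x₁:ℝ) (y₁:ℝ)‖^3
        / (Real.pi * Real.sqrt 3 * (h:ℝ) * |(A₄:ℝ)| ^ ((1:ℝ)/4)) := by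
  
  -- basic positivity facts
  have hA3Z : A₃ ≠ 0 := fun hc => hA34 (by rw [hc, zero_mul])
  have hA4Z : A₄ ≠ 0 := fun hc => hA34 (by rw [hc, mul_zero])
  have hA3r : (A₃:ℝ) ≠ 0 := Int.cast_ne_zero.mpr hA3Z
  have hA4abs : (0:ℝ) < |(A₄:ℝ)| := abs_pos.mpr (Int.cast_ne_zero.mpr hA4Z)
  have hIr : (0:ℝ) < (I:ℝ) := by exact_mod_cast hIpos
  have hhr : (0:ℝ) < (h:ℝ) := by exact_mod_cast hh
  have hpi : (0:ℝ) < Real.pi := Real.pi_pos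
  -- notation
  set R : ℝ := Real.sqrt (3*(I:ℝ)*|(A₄:ℝ)|) with hR
  have hRpos : 0 < R := Real.sqrt_pos.mpr (by positivity)
  set s4 : ℝ := |(A₄:ℝ)| ^ ((1:ℝ)/4) with hs4
  have hs4pos : 0 < s4 := Real.rpow_pos_of_pos hA4abs _
  have hs4sq : s4^2 = Real.sqrt |(A₄:ℝ)| := by
    rw [hs4, ← Real.rpow_natCast (|(A₄:ℝ)| ^ ((1:ℝ)/4)) 2, ← Real.rpow_mul (abs_nonneg _)]
    rw [Real.sqrt_eq_rpow]; norm_num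
  -- conjugation
  have hconj : ∀ x y : ℝ, η x y = (starRingEnd ℂ) (ξ x y) := by
    intro x y
    rw [hξ, hη, map_add, map_mul, map_mul, Complex.conj_ofReal, Complex.conj_ofReal]
  have habsη : ∀ x y : ℝ, ‖η x y‖ = ‖ξ x y‖ := by
    intro x y; rw [hconj, Complex.norm_conj]
  -- per-solution estimate
  have key : ∀ x y : ℤ, Int.gcd x y = 1 → |F x y| ≤ h →
      (∀ ω' : ℂ, ω'^4 = 1 →
        ‖ω - η (x:ℝ) (y:ℝ) / ξ (x:ℝ) (y:ℝ)‖
          ≤ ‖ω' - η (x:ℝ) (y:ℝ) / ξ (x:ℝ) (y:ℝ)‖) →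
      ξ (x:ℝ) (y:ℝ) ≠ 0 ∧
      ‖ω * ξ (x:ℝ) (y:ℝ) - η (x:ℝ) (y:ℝ)‖
        * ‖ξ (x:ℝ) (y:ℝ)‖^3 ≤ Real.pi * R * h := by
    intro x y hg hFh hrel
    have hFne : F x y ≠ 0 := by
      rw [hF]
      exact F_ne_zero' a₀ a₁ a₂ a₃ a₄ ha₀ hirr x y hg
    have hcast : ((a₀:ℂ)*((x:ℝ):ℂ)^4 + (a₁:ℂ)*((x:ℝ):ℂ)^3*((y:ℝ):ℂ)
        + (a₂:ℂ)*((x:ℝ):ℂ)^2*((y:ℝ):ℂ)^2 + (a₃:ℂ)*((x:ℝ):ℂ)*((y:ℝ):ℂ)^3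
        + (a₄:ℂ)*((y:ℝ):ℂ)^4) = ((F x y : ℤ) : ℂ) := by
      rw [hF]; push_cast; ring
    have hres1' : ξ (x:ℝ) (y:ℝ)^4 - η (x:ℝ) (y:ℝ)^4
        = 8 * Complex.I * (R:ℂ) * ((F x y : ℤ) : ℂ) := by
      rw [← hcast]; exact hres1 (x:ℝ) (y:ℝ)
    have habsres : ‖ξ (x:ℝ) (y:ℝ)^4 - η (x:ℝ) (y:ℝ)^4‖
        = 8 * R * |(F x y : ℝ)| := by
      rw [hres1']
      rw [norm_mul, norm_mul, norm_mul, Complex.norm_I, Complex.norm_real, Real.norm_eq_abs]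
      have : ‖((F x y : ℤ) : ℂ)‖ = |(F x y : ℝ)| := by
        rw [show (((F x y : ℤ)) : ℂ) = (((F x y : ℤ):ℝ) : ℂ) by push_cast; ring,
          Complex.norm_real, Real.norm_eq_abs]
      rw [this, _root_.abs_of_nonneg hRpos.le]
      norm_num
    have hξne : ξ (x:ℝ) (y:ℝ) ≠ 0 := by
      intro h0
      have hη0 : η (x:ℝ) (y:ℝ) = 0 := by rw [hconj, h0, map_zero]
      have hzz : (8 * Complex.I * (R:ℂ)) * ((F x y : ℤ) : ℂ) = 0 := by
        rw [← hres1', h0, hη0]; ring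
      have h8 : (8 * Complex.I * (R:ℂ)) ≠ 0 := by
        apply mul_ne_zero (mul_ne_zero (by norm_num) Complex.I_ne_zero)
        simpa using hRpos.ne'
      have : ((F x y : ℤ) : ℂ) = 0 := by
        rcases mul_eq_zero.mp hzz with hc | hc
        · exact absurd hc h8
        · exact hc
      rw [Int.cast_eq_zero] at this
      exact hFne this
    refine ⟨hξne, ?_⟩
    have hξa : 0 < ‖ξ (x:ℝ) (y:ℝ)‖ := norm_pos_iff.mpr hξne
    set z : ℂ := η (x:ℝ) (y:ℝ) / ξ (x:ℝ) (y:ℝ) with hz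
    have hza : ‖z‖ = 1 := by
      rw [hz, norm_div, habsη, div_self hξa.ne']
    have hnear := near_root_bound z ω hza hω hrel
    -- |ωξ - η| = |ξ| * |ω - z| ; |ξ|^4 * |z^4-1| = |ξ^4 - η^4| (up to sign)
    have hfact : ω * ξ (x:ℝ) (y:ℝ) - η (x:ℝ) (y:ℝ) = ξ (x:ℝ) (y:ℝ) * (ω - z) := by
      rw [hz]; field_simp
    have hfact4 : ξ (x:ℝ) (y:ℝ)^4 * (z^4 - 1) = -(ξ (x:ℝ) (y:ℝ)^4 - η (x:ℝ) (y:ℝ)^4) := by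
      rw [hz]; field_simp; ring
    calc ‖ω * ξ (x:ℝ) (y:ℝ) - η (x:ℝ) (y:ℝ)‖ * ‖ξ (x:ℝ) (y:ℝ)‖^3
        = ‖ξ (x:ℝ) (y:ℝ)‖^4 * ‖ω - z‖ := by
          rw [hfact, norm_mul]; ring
      _ ≤ ‖ξ (x:ℝ) (y:ℝ)‖^4 * (Real.pi/8 * ‖z^4 - 1‖) := by
          apply mul_le_mul_of_nonneg_left hnear (by positivity)
      _ = Real.pi/8 * ‖ξ (x:ℝ) (y:ℝ)^4 * (z^4-1)‖ := by
          rw [norm_mul, norm_pow]; ring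
      _ = Real.pi/8 * (8 * R * |(F x y : ℝ)|) := by
          rw [hfact4, norm_neg, habsres]
      _ ≤ Real.pi/8 * (8 * R * h) := by
          have : |(F x y : ℝ)| ≤ (h:ℝ) := by
            rw [show |(F x y : ℝ)| = ((|F x y| : ℤ) : ℝ) by push_cast; ring]
            exact_mod_cast hFh
          apply mul_le_mul_of_nonneg_left _ (by positivity)
          apply mul_le_mul_of_nonneg_left this (by positivity)
      _ = Real.pi * R * h := by ring
  obtain ⟨hξ1ne, hkey1⟩ := key x₁ y₁ hg1 hF1 hrel1
  obtain ⟨hξ2ne, hkey2⟩ := key x₂ y₂ hg2 hF2 hrel2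
  -- the invariant K
  obtain ⟨ε, hε, hr2⟩ := hres2
  set w : ℂ := α * (starRingEnd ℂ) β - (starRingEnd ℂ) α * β with hw
  have hA3sq : (0:ℝ) < (A₃:ℝ)^2 := by
    have := abs_pos.mpr hA3r
    calc (0:ℝ) < |(A₃:ℝ)|^2 := by positivity
      _ = (A₃:ℝ)^2 := sq_abs _
  have hDarg : (0:ℝ) < 12*(A₃:ℝ)^2*Real.sqrt |(A₄:ℝ)| := by
    have h4 : (0:ℝ) < Real.sqrt |(A₄:ℝ)| := Real.sqrt_pos.mpr hA4abs
    nlinarith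
  set Dr : ℝ := Real.sqrt (12*(A₃:ℝ)^2*Real.sqrt |(A₄:ℝ)|) with hDr
  have hDrpos : 0 < Dr := Real.sqrt_pos.mpr hDarg
  have hDr2 : Dr^2 = 12*(A₃:ℝ)^2*Real.sqrt |(A₄:ℝ)| := Real.sq_sqrt hDarg.le
  have e₁ := hr2 1 0
  have e₂ := hr2 0 1
  have e₃ := hr2 1 1
  rw [hξ, hη] at e₁ e₂ e₃
  norm_num at e₁ e₂ e₃
  have hε2 : ε^2 = 1 := by rcases hε with hE | hE <;> subst hE <;> norm_num
  have hw2 : w^2 = (((A₃^2)^2 - 4*(2*A₁*A₄)*(2*A₃*A₄) : ℤ):ℂ)/((Dr:ℝ):ℂ)^2 := by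
    rw [hw]
    push_cast
    push_cast at e₁ e₂ e₃
    linear_combination (α*(starRingEnd ℂ) β + (starRingEnd ℂ) α * β
        + ε*((A₃:ℂ))^2/((Dr:ℝ):ℂ)) * (e₃ - e₁ - e₂)
      - 4*(β*(starRingEnd ℂ) β)*e₁ - 4*(ε*(2*(A₁:ℂ)*(A₄:ℂ))/((Dr:ℝ):ℂ))*e₂
      + (((A₃:ℂ)^2)^2 - 4*(2*(A₁:ℂ)*(A₄:ℂ))*(2*(A₃:ℂ)*(A₄:ℂ)))/((Dr:ℝ):ℂ)^2*hε2
  have hJ' : 2*a₂^3 - 9*a₁*a₂*a₃ + 27*a₁^2*a₄ - 72*a₀*a₂*a₄ + 27*a₀*a₃^2 = 0 := by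
    rw [← hJdef]; exact hJ
  have hintZ : ((A₃^2)^2 - 4*(2*A₁*A₄)*(2*A₃*A₄) : ℤ) = 48*I*A₃^2*A₄ := by
    rw [hI, hA₁, hA₃, hA₄]
    linear_combination (41472*a₂*a₃^4 - 82944*a₂^2*a₃^2*a₄ - 248832*a₁*a₃^3*a₄
      + 331776*a₁*a₂*a₃*a₄^2 + 995328*a₁^2*a₄^3) * hJ'
  have hwconj : (starRingEnd ℂ) w = -w := by
    rw [hw]
    simp only [map_sub, map_mul, Complex.conj_conj]
    ring
  have hwre : w.re = 0 := by
    have h1 := congrArg Complex.re hwconj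
    simp only [Complex.conj_re, Complex.neg_re] at h1
    linarith
  have hwsq : w^2 = ((-(w.im^2) : ℝ) : ℂ) := by
    apply Complex.ext
    · simp only [pow_two, Complex.mul_re, Complex.ofReal_re, hwre]
      ring
    · simp only [pow_two, Complex.mul_im, Complex.ofReal_im, hwre]
      ring
  have hreal : -(w.im^2) = ((48*I*A₃^2*A₄ : ℤ):ℝ)/Dr^2 := by
    have h1 : w^2 = ((((48*I*A₃^2*A₄ : ℤ):ℝ)/Dr^2 : ℝ) : ℂ) := by
      rw [hw2, hintZ]; push_cast; ring
    rw [hwsq] at h1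
    exact_mod_cast h1
  have hrealr : -(w.im^2) = 48*(I:ℝ)*(A₃:ℝ)^2*(A₄:ℝ)/Dr^2 := by
    rw [hreal]; push_cast; ring
  have hA4neg : (A₄:ℝ) < 0 := by
    have hn : 48*(I:ℝ)*(A₃:ℝ)^2*(A₄:ℝ) ≤ 0 := by
      have h2 : 48*(I:ℝ)*(A₃:ℝ)^2*(A₄:ℝ)/Dr^2 ≤ 0 := by
        rw [← hrealr]; nlinarith [sq_nonneg w.im]
      rcases div_nonpos_iff.mp h2 with ⟨hx, hd⟩ | ⟨hx, hd⟩
      · nlinarith [pow_pos hDrpos 2]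
      · exact hx
    have hA4r : (A₄:ℝ) ≠ 0 := Int.cast_ne_zero.mpr hA4Z
    rcases lt_trichotomy (A₄:ℝ) 0 with hlt | heq | hgt
    · exact hlt
    · exact absurd heq hA4r
    · nlinarith [mul_pos (mul_pos hIr hA3sq) hgt]
  have habs4eq : |(A₄:ℝ)| = -(A₄:ℝ) := abs_of_neg hA4neg
  have hK2 : (‖w‖)^2 = 4*(I:ℝ)*Real.sqrt |(A₄:ℝ)| := by
    have hKim : (‖w‖)^2 = w.im^2 := by
      rw [Complex.sq_norm, Complex.normSq_apply, hwre]; ring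
    have hS : Real.sqrt |(A₄:ℝ)| * Real.sqrt |(A₄:ℝ)| = |(A₄:ℝ)| :=
      Real.mul_self_sqrt hA4abs.le
    have hSpos : 0 < Real.sqrt |(A₄:ℝ)| := Real.sqrt_pos.mpr hA4abs
    rw [hKim]
    have him2 : w.im^2 = -(48*(I:ℝ)*(A₃:ℝ)^2*(A₄:ℝ))/Dr^2 := by
      rw [neg_div, ← hrealr, neg_neg]
    rw [him2, hDr2]
    rw [div_eq_iff hDarg.ne']
    linear_combination (-48*(I:ℝ)*(A₃:ℝ)^2) * hS + (-48*(I:ℝ)*(A₃:ℝ)^2) * habs4eq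
  have hKval : ‖w‖ = 2*Real.sqrt (I:ℝ)*s4 := by
    have h1 : (2*Real.sqrt (I:ℝ)*s4)^2 = 4*(I:ℝ)*Real.sqrt |(A₄:ℝ)| := by
      rw [mul_pow, mul_pow, Real.sq_sqrt hIr.le, hs4sq]; ring
    rw [← Real.sqrt_sq (norm_nonneg w), hK2, ← h1,
      Real.sqrt_sq (by positivity)]
  -- assembling
  have hGid : ξ (x₁:ℝ) (y₁:ℝ) * η (x₂:ℝ) (y₂:ℝ) - η (x₁:ℝ) (y₁:ℝ) * ξ (x₂:ℝ) (y₂:ℝ)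
      = w * (((x₁*y₂ - x₂*y₁ : ℤ):ℝ):ℂ) := by
    rw [hξ, hξ, hη, hη, hw]; push_cast; ring
  have hdet1 : (1:ℝ) ≤ |((x₁*y₂ - x₂*y₁ : ℤ):ℝ)| := by
    rw [← Int.cast_abs]
    exact_mod_cast Int.one_le_abs hdist
  have hKle : ‖w‖
      ≤ ‖ξ (x₁:ℝ) (y₁:ℝ) * η (x₂:ℝ) (y₂:ℝ)
          - η (x₁:ℝ) (y₁:ℝ) * ξ (x₂:ℝ) (y₂:ℝ)‖ := by
    rw [hGid, norm_mul, Complex.norm_real, Real.norm_eq_abs]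
    nlinarith [norm_nonneg w]
  have htri : ‖ξ (x₁:ℝ) (y₁:ℝ) * η (x₂:ℝ) (y₂:ℝ)
        - η (x₁:ℝ) (y₁:ℝ) * ξ (x₂:ℝ) (y₂:ℝ)‖
      ≤ ‖ξ (x₁:ℝ) (y₁:ℝ)‖
          * ‖ω * ξ (x₂:ℝ) (y₂:ℝ) - η (x₂:ℝ) (y₂:ℝ)‖
        + ‖ξ (x₂:ℝ) (y₂:ℝ)‖
          * ‖ω * ξ (x₁:ℝ) (y₁:ℝ) - η (x₁:ℝ) (y₁:ℝ)‖ := by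
    have hid : ξ (x₁:ℝ) (y₁:ℝ) * η (x₂:ℝ) (y₂:ℝ) - η (x₁:ℝ) (y₁:ℝ) * ξ (x₂:ℝ) (y₂:ℝ)
        = (-(ξ (x₁:ℝ) (y₁:ℝ) * (ω * ξ (x₂:ℝ) (y₂:ℝ) - η (x₂:ℝ) (y₂:ℝ))))
          + ξ (x₂:ℝ) (y₂:ℝ) * (ω * ξ (x₁:ℝ) (y₁:ℝ) - η (x₁:ℝ) (y₁:ℝ)) := by ring
    rw [hid]
    calc ‖_‖ ≤ ‖-(ξ (x₁:ℝ) (y₁:ℝ) * (ω * ξ (x₂:ℝ) (y₂:ℝ) - η (x₂:ℝ) (y₂:ℝ)))‖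
          + ‖ξ (x₂:ℝ) (y₂:ℝ) * (ω * ξ (x₁:ℝ) (y₁:ℝ) - η (x₁:ℝ) (y₁:ℝ))‖ :=
        norm_add_le _ _
      _ = _ := by rw [norm_neg, norm_mul, norm_mul]
  have hRval : R = Real.sqrt 3 * Real.sqrt (I:ℝ) * s4^2 := by
    rw [hR, show 3*(I:ℝ)*|(A₄:ℝ)| = (3*(I:ℝ))*|(A₄:ℝ)| from rfl,
      Real.sqrt_mul (by positivity), Real.sqrt_mul (by norm_num : (0:ℝ) ≤ 3), hs4sq]
  have hcpos : 0 < Real.pi * Real.sqrt 3 * (h:ℝ) * s4 := by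
    apply mul_pos (mul_pos (mul_pos hpi (Real.sqrt_pos.mpr (by norm_num))) hhr) hs4pos
  have hBc : 2*(Real.pi * R * (h:ℝ))
      = (‖w‖) * (Real.pi * Real.sqrt 3 * (h:ℝ) * s4) := by
    rw [hKval, hRval]; ring
  have hp : 0 < ‖ξ (x₁:ℝ) (y₁:ℝ)‖ := norm_pos_iff.mpr hξ1ne
  have hq : 0 < ‖ξ (x₂:ℝ) (y₂:ℝ)‖ := norm_pos_iff.mpr hξ2ne
  have hfinal := assemble (‖ξ (x₁:ℝ) (y₁:ℝ)‖) (‖ξ (x₂:ℝ) (y₂:ℝ)‖)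
    (‖ω * ξ (x₁:ℝ) (y₁:ℝ) - η (x₁:ℝ) (y₁:ℝ)‖)
    (‖ω * ξ (x₂:ℝ) (y₂:ℝ) - η (x₂:ℝ) (y₂:ℝ)‖)
    (Real.pi * R * (h:ℝ)) (‖w‖) (Real.pi * Real.sqrt 3 * (h:ℝ) * s4)
    hp hq hle hkey1 hkey2 (le_trans hKle htri)
    (norm_nonneg _) (norm_nonneg _)
    (by positivity) hcpos hBc
  exact hfinal
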